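/- For every integer n ≥ 1 there exists a globally simple tight relative non-zero sum Heffter array NH_2(n;n): an n×n matrix A = (a_{i,j}) with entries in Z_{2n²+2} such that the multiset formed by all a_{i,j} and −a_{i,j} contains every element of Z_{2n²+2} ∖ {0, n²+1} exactly once, and for every row i the partial sums a_{i,1} + ⋯ + a_{i,k} (1 ≤ k ≤ n) are nonzero and pairwise distinct in Z_{2n²+2}, and for every column j the partial sums a_{1,j} + ⋯ + a_{k,j} (1 ≤ k ≤ n) are nonzero and pairwise distinct in Z_{2n²+2}. -/
import Mathlib

namespace S2H

/-- entry of the array (as an integer) -/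
def ent (n i j : ℕ) : ℤ := (-1) ^ (i + j) * (((i - 1) * n + j : ℕ) : ℤ)

/-- closed form of row alternating partial sums -/
def rowF (m k : ℕ) : ℤ := if k % 2 = 0 then ((k / 2 : ℕ) : ℤ) else -((m : ℤ) + (k / 2 : ℕ) + 1)

/-- closed form of column alternating partial sums -/
def colF (n j k : ℕ) : ℤ :=
  if k % 2 = 0 then (((k / 2) * n : ℕ) : ℤ) else -((((k / 2) * n + j : ℕ) : ℤ))

lemma rowAux (m : ℕ) : ∀ k : ℕ,
    ∑ j ∈ Finset.Icc 1 k, (-1 : ℤ) ^ j * ((m : ℤ) + j) = rowF m k := by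
  intro k
  induction k with
  | zero => simp [rowF]
  | succ k ih =>
    rw [Finset.sum_Icc_succ_top (by omega), ih]
    rcases Nat.even_or_odd k with ⟨c, hc⟩ | ⟨c, hc⟩
    · obtain rfl : k = 2 * c := by omega
      have hp : (-1 : ℤ) ^ (2 * c + 1) = -1 := Odd.neg_one_pow ⟨c, by ring⟩
      have e1 : (2 * c) % 2 = 0 := by omega
      have e2 : (2 * c + 1) % 2 = 1 := by omega
      have e3 : (2 * c) / 2 = c := by omega
      have e4 : (2 * c + 1) / 2 = c := by omega
      simp only [rowF, e1, e2, e3, e4, hp, if_pos, if_neg, one_ne_zero]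
      norm_num
      push_cast
      ring
    · obtain rfl : k = 2 * c + 1 := by omega
      have hp : (-1 : ℤ) ^ (2 * c + 1 + 1) = 1 := Even.neg_one_pow ⟨c + 1, by ring⟩
      have e1 : (2 * c + 1) % 2 = 1 := by omega
      have e2 : (2 * c + 1 + 1) % 2 = 0 := by omega
      have e3 : (2 * c + 1) / 2 = c := by omega
      have e4 : (2 * c + 1 + 1) / 2 = c + 1 := by omega
      simp only [rowF, e1, e2, e3, e4, hp, one_ne_zero]
      norm_num
      push_cast
      ring

lemma colAux (n jj : ℕ) : ∀ k : ℕ,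
    ∑ i ∈ Finset.Icc 1 k, (-1 : ℤ) ^ i * (((i - 1) * n + jj : ℕ) : ℤ) = colF n jj k := by
  intro k
  induction k with
  | zero => simp [colF]
  | succ k ih =>
    rw [Finset.sum_Icc_succ_top (by omega), ih]
    have ht : (k + 1 - 1) * n + jj = k * n + jj := by simp
    rw [ht]
    rcases Nat.even_or_odd k with ⟨c, hc⟩ | ⟨c, hc⟩
    · obtain rfl : k = 2 * c := by omega
      have hp : (-1 : ℤ) ^ (2 * c + 1) = -1 := Odd.neg_one_pow ⟨c, by ring⟩
      have e1 : (2 * c) % 2 = 0 := by omega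
      have e2 : (2 * c + 1) % 2 = 1 := by omega
      have e3 : (2 * c) / 2 = c := by omega
      have e4 : (2 * c + 1) / 2 = c := by omega
      simp only [colF, e1, e2, e3, e4, hp, one_ne_zero]
      norm_num
      push_cast
      ring
    · obtain rfl : k = 2 * c + 1 := by omega
      have hp : (-1 : ℤ) ^ (2 * c + 1 + 1) = 1 := Even.neg_one_pow ⟨c + 1, by ring⟩
      have e1 : (2 * c + 1) % 2 = 1 := by omega
      have e2 : (2 * c + 1 + 1) % 2 = 0 := by omega
      have e3 : (2 * c + 1) / 2 = c := by omega
      have e4 : (2 * c + 1 + 1) / 2 = c + 1 := by omega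
      simp only [colF, e1, e2, e3, e4, hp, one_ne_zero]
      norm_num
      push_cast
      ring


lemma castInj (v : ℕ) (a b : ℤ) (ha : 2 * |a| < (v : ℤ)) (hb : 2 * |b| < (v : ℤ))
    (h : ((a : ℤ) : ZMod v) = ((b : ℤ) : ZMod v)) : a = b := by
  have h2 : a ≡ b [ZMOD (v : ℕ)] := (ZMod.intCast_eq_intCast_iff a b v).mp h
  have h3 : (v : ℤ) ∣ b - a := Int.ModEq.dvd h2
  have h4 : b - a = 0 := by
    refine Int.eq_zero_of_abs_lt_dvd h3 ?_
    have l1 := le_abs_self a; have l2 := neg_abs_le a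
    have l3 := le_abs_self b; have l4 := neg_abs_le b
    rw [abs_sub_lt_iff]
    constructor <;> linarith
  linarith

lemma castNeZero (v : ℕ) (a : ℤ) (ha : 2 * |a| < (v : ℤ)) (h0 : a ≠ 0) :
    ((a : ℤ) : ZMod v) ≠ 0 := fun h =>
  h0 (castInj v a 0 ha
    (by simpa using lt_of_le_of_lt (by positivity : (0 : ℤ) ≤ 2 * |a|) ha)
    (by simpa using h))

lemma pairCount {α : Type*} [DecidableEq α] (x a b : α) :
    Multiset.count x ({a, b} : Multiset α) =
      (if x = a then 1 else 0) + (if x = b then 1 else 0) := by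
  rw [Multiset.insert_eq_cons, Multiset.count_cons, Multiset.count_singleton]
  split_ifs <;> simp

lemma valIff (v : ℕ) [NeZero v] (x : ZMod v) (m : ℕ) (h : m < v) :
    (x = ((m : ℕ) : ZMod v)) ↔ x.val = m := by
  constructor
  · rintro rfl; exact ZMod.val_cast_of_lt h
  · rintro rfl; exact (ZMod.natCast_rightInverse x).symm

lemma negCast (v m : ℕ) (hm : m ≤ v) :
    -((m : ℕ) : ZMod v) = (((v - m : ℕ) : ℕ) : ZMod v) := by
  have h : ((v - m : ℕ) : ZMod v) + ((m : ℕ) : ZMod v) = 0 := by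
    rw [← Nat.cast_add]
    have hvm : v - m + m = v := by omega
    rw [hvm, ZMod.natCast_self]
  exact neg_eq_of_add_eq_zero_left h

lemma sqAux (n : ℕ) (hn : 1 ≤ n) : (n - 1) * n + n = n ^ 2 := by
  cases n with
  | zero => omega
  | succ m => simp [pow_two]; ring

lemma mulBound (n i : ℕ) (hn : 1 ≤ n) (hi : i ≤ n) : (i - 1) * n + n ≤ n ^ 2 := by
  have h1 : (i - 1) * n ≤ (n - 1) * n := Nat.mul_le_mul_right n (by omega)
  have h2 := sqAux n hn
  linarith

lemma reindex {M : Type*} [AddCommMonoid M] (n : ℕ) (hn : 1 ≤ n) (F : ℕ → M) :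
    ∑ p ∈ Finset.Icc 1 n ×ˢ Finset.Icc 1 n, F ((p.1 - 1) * n + p.2) =
      ∑ m ∈ Finset.Icc 1 (n ^ 2), F m := by
  have h0 : 0 < n := hn
  refine Finset.sum_nbij' (fun p => (p.1 - 1) * n + p.2)
    (fun m => ((m - 1) / n + 1, (m - 1) % n + 1)) ?_ ?_ ?_ ?_ ?_
  · rintro ⟨a, b⟩ hp
    simp only [Finset.mem_product, Finset.mem_Icc] at hp
    simp only [Finset.mem_Icc]
    refine ⟨le_trans hp.2.1 (Nat.le_add_left b _), ?_⟩
    have h1 : (a - 1) * n ≤ (n - 1) * n := Nat.mul_le_mul_right n (by omega)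
    have h2 := sqAux n hn
    have h3 : b ≤ n := hp.2.2
    linarith
  · rintro m hm
    simp only [Finset.mem_Icc] at hm
    simp only [Finset.mem_product, Finset.mem_Icc]
    have hdiv : (m - 1) / n < n := by
      rw [Nat.div_lt_iff_lt_mul h0]
      have h2 := sqAux n hn
      have h3 : m - 1 < m := Nat.sub_lt (by omega) one_pos
      have h4 : m ≤ n ^ 2 := hm.2
      have h5 : n * n = n ^ 2 := (pow_two n).symm
      linarith
    have hmod : (m - 1) % n < n := Nat.mod_lt _ h0
    exact ⟨⟨Nat.le_add_left 1 _, Nat.succ_le_of_lt hdiv⟩, Nat.le_add_left 1 _,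
      Nat.succ_le_of_lt hmod⟩
  · rintro ⟨a, b⟩ hp
    simp only [Finset.mem_product, Finset.mem_Icc] at hp
    have hb : b - 1 < n := by omega
    have key : (a - 1) * n + b - 1 = (b - 1) + n * (a - 1) := by
      rw [Nat.mul_comm, Nat.add_sub_assoc hp.2.1]
      exact Nat.add_comm _ _
    have hdiv : ((b - 1) + n * (a - 1)) / n = a - 1 := by
      rw [Nat.add_mul_div_left _ _ h0, Nat.div_eq_of_lt hb, Nat.zero_add]
    have hmod : ((b - 1) + n * (a - 1)) % n = b - 1 := by
      rw [Nat.add_mul_mod_self_left, Nat.mod_eq_of_lt hb]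
    simp only [Prod.mk.injEq]
    constructor
    · rw [key, hdiv]; omega
    · rw [key, hmod]; omega
  · rintro m hm
    simp only [Finset.mem_Icc] at hm
    have h := Nat.div_add_mod (m - 1) n
    simp only [Nat.add_sub_cancel]
    have key : (m - 1) / n * n + ((m - 1) % n + 1) = (n * ((m - 1) / n) + (m - 1) % n) + 1 := by
      ring
    rw [key, h]
    omega
  · exact fun a _ => rfl



lemma rowF_abs (m k n : ℕ) (hn : 1 ≤ n) (hk1 : 1 ≤ k) (hk : k ≤ n) :
    |rowF m k| ≤ (m : ℤ) + n := by
  unfold rowF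
  split_ifs with h
  · rw [abs_of_nonneg (Int.natCast_nonneg _)]
    have h1 : k / 2 ≤ n := by omega
    have h2 : ((k / 2 : ℕ) : ℤ) ≤ (n : ℤ) := by exact_mod_cast h1
    have h3 : (0 : ℤ) ≤ (m : ℤ) := Int.natCast_nonneg m
    linarith
  · have h3 : (0 : ℤ) ≤ (m : ℤ) := Int.natCast_nonneg m
    have h4 : (0 : ℤ) ≤ ((k / 2 : ℕ) : ℤ) := Int.natCast_nonneg _
    rw [abs_of_nonpos (by linarith), neg_neg]
    have h1 : k / 2 + 1 ≤ n := by omega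
    have h2 : ((k / 2 : ℕ) : ℤ) + 1 ≤ (n : ℤ) := by exact_mod_cast h1
    linarith

lemma rowF_ne (m k : ℕ) (hk1 : 1 ≤ k) : rowF m k ≠ 0 := by
  unfold rowF
  split_ifs with h
  · have h1 : 1 ≤ k / 2 := by omega
    have h2 : (1 : ℤ) ≤ ((k / 2 : ℕ) : ℤ) := by exact_mod_cast h1
    intro hc; rw [hc] at h2; norm_num at h2
  · intro hc
    have h3 : (0 : ℤ) ≤ (m : ℤ) := Int.natCast_nonneg m
    have h4 : (0 : ℤ) ≤ ((k / 2 : ℕ) : ℤ) := Int.natCast_nonneg _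
    have : (m : ℤ) + (k / 2 : ℕ) + 1 = 0 := by linarith [neg_eq_zero.mp hc]
    linarith

lemma rowF_inj (m k k' : ℕ) (hk1 : 1 ≤ k) (hk1' : 1 ≤ k') (h : rowF m k = rowF m k') :
    k = k' := by
  unfold rowF at h
  have h3 : (0 : ℤ) ≤ (m : ℤ) := Int.natCast_nonneg m
  have h4 : (0 : ℤ) ≤ ((k / 2 : ℕ) : ℤ) := Int.natCast_nonneg _
  have h5 : (0 : ℤ) ≤ ((k' / 2 : ℕ) : ℤ) := Int.natCast_nonneg _
  split_ifs at h with h1 h2 h2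
  · have : (k / 2 : ℕ) = k' / 2 := by exact_mod_cast h
    omega
  · exfalso; linarith
  · exfalso; linarith
  · have h6 : ((k / 2 : ℕ) : ℤ) = ((k' / 2 : ℕ) : ℤ) := by linarith
    have : (k / 2 : ℕ) = k' / 2 := by exact_mod_cast h6
    omega

lemma colF_abs (n j k : ℕ) (hn : 1 ≤ n) (hj : j ≤ n) (hk : k ≤ n) :
    |colF n j k| ≤ (((n - 1) * n + n : ℕ) : ℤ) := by
  have hd : k / 2 ≤ n - 1 := by omega
  have h1 : (k / 2) * n ≤ (n - 1) * n := Nat.mul_le_mul_right n hd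
  unfold colF
  split_ifs with h
  · rw [abs_of_nonneg (Int.natCast_nonneg _)]
    exact_mod_cast le_trans h1 (Nat.le_add_right _ n)
  · rw [abs_of_nonpos (neg_nonpos.mpr (Int.natCast_nonneg _)), neg_neg]
    exact_mod_cast add_le_add h1 hj

lemma colF_ne (n j k : ℕ) (hn : 1 ≤ n) (hj1 : 1 ≤ j) (hk1 : 1 ≤ k) : colF n j k ≠ 0 := by
  unfold colF
  split_ifs with h
  · have h1 : 1 ≤ (k / 2) * n := Nat.mul_pos (by omega) (by omega)
    have h2 : (1 : ℤ) ≤ (((k / 2) * n : ℕ) : ℤ) := by exact_mod_cast h1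
    intro hc; rw [hc] at h2; norm_num at h2
  · have h1 : 1 ≤ (k / 2) * n + j := by omega
    have h2 : (1 : ℤ) ≤ (((k / 2) * n + j : ℕ) : ℤ) := by exact_mod_cast h1
    intro hc
    have := neg_eq_zero.mp hc
    rw [this] at h2; norm_num at h2

lemma colF_inj (n j k k' : ℕ) (hn : 1 ≤ n) (hj1 : 1 ≤ j) (hk1 : 1 ≤ k) (hk1' : 1 ≤ k')
    (h : colF n j k = colF n j k') : k = k' := by
  unfold colF at h
  have h4 : (0 : ℤ) ≤ (((k / 2) * n : ℕ) : ℤ) := Int.natCast_nonneg _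
  have h5 : (0 : ℤ) ≤ (((k' / 2) * n : ℕ) : ℤ) := Int.natCast_nonneg _
  have h6 : (0 : ℤ) ≤ (((k / 2) * n + j : ℕ) : ℤ) := Int.natCast_nonneg _
  have h7 : (0 : ℤ) ≤ (((k' / 2) * n + j : ℕ) : ℤ) := Int.natCast_nonneg _
  have hj2 : (1 : ℤ) ≤ (j : ℤ) := by exact_mod_cast hj1
  split_ifs at h with h1 h2 h2
  · have hnat : (k / 2) * n = (k' / 2) * n := by exact_mod_cast h
    have : k / 2 = k' / 2 := Nat.eq_of_mul_eq_mul_right (by omega) hnat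
    omega
  · exfalso
    have h8 : (((k' / 2) * n + j : ℕ) : ℤ) = (((k' / 2) * n : ℕ) : ℤ) + (j : ℤ) := by push_cast; ring
    rw [h8] at h; linarith
  · exfalso
    have h8 : (((k / 2) * n + j : ℕ) : ℤ) = (((k / 2) * n : ℕ) : ℤ) + (j : ℤ) := by push_cast; ring
    rw [h8] at h; linarith
  · have hnat : (k / 2) * n + j = (k' / 2) * n + j := by exact_mod_cast neg_injective h
    have : k / 2 = k' / 2 := Nat.eq_of_mul_eq_mul_right (by omega) (Nat.add_right_cancel hnat)
    omega

lemma sumEval (P w : ℕ) (hw : w < 2 * P + 2) :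
    ∑ m ∈ Finset.Icc 1 P, ((if w = m then 1 else 0) + (if w = 2 * P + 2 - m then 1 else 0)) =
      (if w ∈ Finset.Icc 1 P then 1 else 0) +
        (if 2 * P + 2 - w ∈ Finset.Icc 1 P then (1 : ℕ) else 0) := by
  rw [Finset.sum_add_distrib]
  congr 1
  · have step : ∀ m ∈ Finset.Icc 1 P, (if w = m then (1 : ℕ) else 0) =
        (if m = w then 1 else 0) := by
      intro m hm; simp only [Finset.mem_Icc] at hm; split_ifs <;> omega
    rw [Finset.sum_congr rfl step,
      Finset.sum_ite_eq' (Finset.Icc 1 P) w (fun _ => (1 : ℕ))]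
  · have step : ∀ m ∈ Finset.Icc 1 P, (if w = 2 * P + 2 - m then (1 : ℕ) else 0) =
        (if m = 2 * P + 2 - w then 1 else 0) := by
      intro m hm; simp only [Finset.mem_Icc] at hm; split_ifs <;> omega
    rw [Finset.sum_congr rfl step,
      Finset.sum_ite_eq' (Finset.Icc 1 P) (2 * P + 2 - w) (fun _ => (1 : ℕ))]

lemma countValJ (P w : ℕ) (h : w = 0 ∨ w = P + 1) :
    (if w ∈ Finset.Icc 1 P then (1 : ℕ) else 0) +
      (if 2 * P + 2 - w ∈ Finset.Icc 1 P then (1 : ℕ) else 0) = 0 := by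
  simp only [Finset.mem_Icc]
  split_ifs <;> omega

lemma countValNJ (P w : ℕ) (hw : w < 2 * P + 2) (h0 : w ≠ 0) (h1 : w ≠ P + 1) :
    (if w ∈ Finset.Icc 1 P then (1 : ℕ) else 0) +
      (if 2 * P + 2 - w ∈ Finset.Icc 1 P then (1 : ℕ) else 0) = 1 := by
  simp only [Finset.mem_Icc]
  split_ifs <;> omega


end S2H

namespace S2H

lemma cellCount (n : ℕ) [NeZero (2 * n ^ 2 + 2)] (x : ZMod (2 * n ^ 2 + 2)) (i j : ℕ)
    (hm1 : 1 ≤ (i - 1) * n + j) (hm2 : (i - 1) * n + j ≤ n ^ 2) :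
    Multiset.count x ({((ent n i j : ℤ) : ZMod (2 * n ^ 2 + 2)),
        -((ent n i j : ℤ) : ZMod (2 * n ^ 2 + 2))} : Multiset (ZMod (2 * n ^ 2 + 2))) =
      (if x.val = (i - 1) * n + j then 1 else 0) +
        (if x.val = 2 * n ^ 2 + 2 - ((i - 1) * n + j) then 1 else 0) := by
  set m := (i - 1) * n + j with hmdef
  have hmv : m < 2 * n ^ 2 + 2 := by
    have h : n ^ 2 < 2 * n ^ 2 + 2 := by linarith [Nat.zero_le (n ^ 2)]
    exact lt_of_le_of_lt hm2 h
  have hvm1 : 2 * n ^ 2 + 2 - m < 2 * n ^ 2 + 2 :=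
    Nat.sub_lt (by positivity) (lt_of_lt_of_le one_pos hm1)
  have hiff1 : (x = ((m : ℕ) : ZMod (2 * n ^ 2 + 2))) ↔ x.val = m := valIff _ x m hmv
  have hneg : -((m : ℕ) : ZMod (2 * n ^ 2 + 2)) =
      (((2 * n ^ 2 + 2 - m : ℕ) : ℕ) : ZMod (2 * n ^ 2 + 2)) := negCast _ m (le_of_lt hmv)
  have hiff2 : (x = -((m : ℕ) : ZMod (2 * n ^ 2 + 2))) ↔ x.val = 2 * n ^ 2 + 2 - m := by
    rw [hneg]; exact valIff _ x _ hvm1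
  have hent : ((ent n i j : ℤ) : ZMod (2 * n ^ 2 + 2)) = ((m : ℕ) : ZMod (2 * n ^ 2 + 2)) ∨
      ((ent n i j : ℤ) : ZMod (2 * n ^ 2 + 2)) = -((m : ℕ) : ZMod (2 * n ^ 2 + 2)) := by
    unfold ent
    rw [← hmdef]
    rcases Nat.even_or_odd (i + j) with he | ho
    · left; rw [he.neg_one_pow, one_mul]; push_cast; ring
    · right; rw [ho.neg_one_pow]; push_cast; ring
  rcases hent with h | h <;> rw [h]
  · rw [pairCount, if_congr hiff1 rfl rfl, if_congr hiff2 rfl rfl]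
  · rw [neg_neg, pairCount, if_congr hiff2 rfl rfl, if_congr hiff1 rfl rfl]
    exact add_comm _ _

end S2H

/-- Proposition 3.2 (existence form): for every n ≥ 1 there exists a globally simple
tight relative non-zero sum Heffter array NH₂(n;n), formalized as an n×n matrix
(1-indexed) over Z_{2n²+2} such that the multiset of all entries together with their
negatives covers Z_{2n²+2} ∖ {0, n²+1} exactly once, and all (natural, left-to-right
resp. top-to-bottom) partial sums of every row and column are nonzero and pairwise
distinct. -/
theorem stmt2 (n : ℕ) (hn : 1 ≤ n) :
    ∃ A : ℕ → ℕ → ZMod (2 * n ^ 2 + 2),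
      (∀ x : ZMod (2 * n ^ 2 + 2),
        (x = 0 ∨ x = ((n ^ 2 + 1 : ℕ) : ZMod (2 * n ^ 2 + 2))) →
        Multiset.count x
          (((Finset.Icc 1 n ×ˢ Finset.Icc 1 n).val).bind
            (fun p => ({A p.1 p.2, -A p.1 p.2} : Multiset (ZMod (2 * n ^ 2 + 2))))) = 0) ∧
      (∀ x : ZMod (2 * n ^ 2 + 2),
        ¬(x = 0 ∨ x = ((n ^ 2 + 1 : ℕ) : ZMod (2 * n ^ 2 + 2))) →
        Multiset.count x
          (((Finset.Icc 1 n ×ˢ Finset.Icc 1 n).val).bind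
            (fun p => ({A p.1 p.2, -A p.1 p.2} : Multiset (ZMod (2 * n ^ 2 + 2))))) = 1) ∧
      (∀ i ∈ Finset.Icc 1 n, ∀ k ∈ Finset.Icc 1 n,
        (∑ j ∈ Finset.Icc 1 k, A i j) ≠ 0) ∧
      (∀ i ∈ Finset.Icc 1 n, ∀ k ∈ Finset.Icc 1 n, ∀ k' ∈ Finset.Icc 1 n,
        (∑ j ∈ Finset.Icc 1 k, A i j) = (∑ j ∈ Finset.Icc 1 k', A i j) → k = k') ∧
      (∀ j ∈ Finset.Icc 1 n, ∀ k ∈ Finset.Icc 1 n,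
        (∑ i ∈ Finset.Icc 1 k, A i j) ≠ 0) ∧
      (∀ j ∈ Finset.Icc 1 n, ∀ k ∈ Finset.Icc 1 n, ∀ k' ∈ Finset.Icc 1 n,
        (∑ i ∈ Finset.Icc 1 k, A i j) = (∑ i ∈ Finset.Icc 1 k', A i j) → k = k') := by
  haveI : NeZero (2 * n ^ 2 + 2) := ⟨by positivity⟩
  have hsqcast : ((2 * n ^ 2 + 2 : ℕ) : ℤ) = 2 * ((n ^ 2 : ℕ) : ℤ) + 2 := by push_cast; ring
  -- row sums closed form
  have hrow : ∀ i k : ℕ, (∑ j ∈ Finset.Icc 1 k, ((S2H.ent n i j : ℤ) : ZMod (2 * n ^ 2 + 2))) =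
      (((-1 : ℤ) ^ i * S2H.rowF ((i - 1) * n) k : ℤ) : ZMod (2 * n ^ 2 + 2)) := by
    intro i k
    have hc : ((∑ j ∈ Finset.Icc 1 k, S2H.ent n i j : ℤ) : ZMod (2 * n ^ 2 + 2)) =
        ∑ j ∈ Finset.Icc 1 k, ((S2H.ent n i j : ℤ) : ZMod (2 * n ^ 2 + 2)) := by
      push_cast; rfl
    rw [← hc]
    congr 1
    rw [← S2H.rowAux ((i - 1) * n) k, Finset.mul_sum]
    refine Finset.sum_congr rfl fun j hj => ?_
    unfold S2H.ent
    rw [pow_add]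
    push_cast
    ring
  have hcol : ∀ j k : ℕ, (∑ i ∈ Finset.Icc 1 k, ((S2H.ent n i j : ℤ) : ZMod (2 * n ^ 2 + 2))) =
      (((-1 : ℤ) ^ j * S2H.colF n j k : ℤ) : ZMod (2 * n ^ 2 + 2)) := by
    intro j k
    have hc : ((∑ i ∈ Finset.Icc 1 k, S2H.ent n i j : ℤ) : ZMod (2 * n ^ 2 + 2)) =
        ∑ i ∈ Finset.Icc 1 k, ((S2H.ent n i j : ℤ) : ZMod (2 * n ^ 2 + 2)) := by
      push_cast; rfl
    rw [← hc]
    congr 1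
    rw [← S2H.colAux n j k, Finset.mul_sum]
    refine Finset.sum_congr rfl fun i hi => ?_
    unfold S2H.ent
    rw [pow_add]
    ring
  -- bounds
  have hrowbound : ∀ i k : ℕ, i ≤ n → 1 ≤ k → k ≤ n →
      2 * |(-1 : ℤ) ^ i * S2H.rowF ((i - 1) * n) k| < ((2 * n ^ 2 + 2 : ℕ) : ℤ) := by
    intro i k hi hk1 hk
    have h1 : |(-1 : ℤ) ^ i * S2H.rowF ((i - 1) * n) k| = |S2H.rowF ((i - 1) * n) k| := by
      rw [abs_mul, abs_pow, abs_neg, abs_one, one_pow, one_mul]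
    rw [h1, hsqcast]
    have h2 := S2H.rowF_abs ((i - 1) * n) k n hn hk1 hk
    have h3 : (i - 1) * n + n ≤ n ^ 2 := S2H.mulBound n i hn hi
    have h4 : (((i - 1) * n : ℕ) : ℤ) + (n : ℤ) ≤ ((n ^ 2 : ℕ) : ℤ) := by exact_mod_cast h3
    linarith
  have hcolbound : ∀ j k : ℕ, j ≤ n → 1 ≤ k → k ≤ n →
      2 * |(-1 : ℤ) ^ j * S2H.colF n j k| < ((2 * n ^ 2 + 2 : ℕ) : ℤ) := by
    intro j k hj hk1 hk
    have h1 : |(-1 : ℤ) ^ j * S2H.colF n j k| = |S2H.colF n j k| := by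
      rw [abs_mul, abs_pow, abs_neg, abs_one, one_pow, one_mul]
    rw [h1, hsqcast]
    have h2 := S2H.colF_abs n j k hn hj hk
    have h3 : (n - 1) * n + n = n ^ 2 := S2H.sqAux n hn
    have h4 : (((n - 1) * n + n : ℕ) : ℤ) = ((n ^ 2 : ℕ) : ℤ) := by exact_mod_cast h3
    rw [h4] at h2
    linarith
  have hcnt : ∀ x : ZMod (2 * n ^ 2 + 2),
      Multiset.count x (((Finset.Icc 1 n ×ˢ Finset.Icc 1 n).val).bind
        (fun p => ({((S2H.ent n p.1 p.2 : ℤ) : ZMod (2 * n ^ 2 + 2)),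
          -((S2H.ent n p.1 p.2 : ℤ) : ZMod (2 * n ^ 2 + 2))} :
            Multiset (ZMod (2 * n ^ 2 + 2))))) =
      (if x.val ∈ Finset.Icc 1 (n ^ 2) then 1 else 0) +
        (if 2 * n ^ 2 + 2 - x.val ∈ Finset.Icc 1 (n ^ 2) then 1 else 0) := by
    intro x
    rw [Multiset.count_bind]
    have hdef : (Multiset.map (fun p => Multiset.count x
        ({((S2H.ent n p.1 p.2 : ℤ) : ZMod (2 * n ^ 2 + 2)),
          -((S2H.ent n p.1 p.2 : ℤ) : ZMod (2 * n ^ 2 + 2))} :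
            Multiset (ZMod (2 * n ^ 2 + 2))))
        (Finset.Icc 1 n ×ˢ Finset.Icc 1 n).val).sum =
        ∑ p ∈ Finset.Icc 1 n ×ˢ Finset.Icc 1 n, Multiset.count x
        ({((S2H.ent n p.1 p.2 : ℤ) : ZMod (2 * n ^ 2 + 2)),
          -((S2H.ent n p.1 p.2 : ℤ) : ZMod (2 * n ^ 2 + 2))} :
            Multiset (ZMod (2 * n ^ 2 + 2))) := rfl
    rw [hdef]
    have hstep : ∀ p ∈ Finset.Icc 1 n ×ˢ Finset.Icc 1 n, Multiset.count x
        ({((S2H.ent n p.1 p.2 : ℤ) : ZMod (2 * n ^ 2 + 2)),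
          -((S2H.ent n p.1 p.2 : ℤ) : ZMod (2 * n ^ 2 + 2))} :
            Multiset (ZMod (2 * n ^ 2 + 2))) =
        (fun m => (if x.val = m then 1 else 0) +
          (if x.val = 2 * n ^ 2 + 2 - m then 1 else 0)) ((p.1 - 1) * n + p.2) := by
      rintro ⟨a, b⟩ hp
      simp only [Finset.mem_product, Finset.mem_Icc] at hp
      refine S2H.cellCount n x a b ?_ ?_
      · exact le_trans hp.2.1 (Nat.le_add_left b _)
      · have h1 : (a - 1) * n + b ≤ (a - 1) * n + n := Nat.add_le_add_left hp.2.2 _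
        exact le_trans h1 (S2H.mulBound n a hn hp.1.2)
    rw [Finset.sum_congr rfl hstep, S2H.reindex n hn (fun m => (if x.val = m then 1 else 0) +
      (if x.val = 2 * n ^ 2 + 2 - m then 1 else 0))]
    exact S2H.sumEval (n ^ 2) x.val (ZMod.val_lt x)
  refine ⟨fun i j => ((S2H.ent n i j : ℤ) : ZMod (2 * n ^ 2 + 2)), ?_, ?_, ?_, ?_, ?_, ?_⟩
  · intro x hx
    rw [hcnt x]
    rcases hx with rfl | rfl
    · rw [ZMod.val_zero]
      exact S2H.countValJ (n ^ 2) 0 (Or.inl rfl)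
    · have h1 : ((n ^ 2 + 1 : ℕ) : ZMod (2 * n ^ 2 + 2)).val = n ^ 2 + 1 :=
        ZMod.val_cast_of_lt (by linarith [Nat.zero_le (n ^ 2)])
      rw [h1]
      exact S2H.countValJ (n ^ 2) _ (Or.inr rfl)
  · intro x hx
    push_neg at hx
    rw [hcnt x]
    refine S2H.countValNJ (n ^ 2) x.val (ZMod.val_lt x) ?_ ?_
    · intro h; exact hx.1 ((ZMod.val_eq_zero x).mp h)
    · intro h
      apply hx.2
      conv_lhs => rw [← ZMod.natCast_rightInverse x]
      rw [h]
  -- row partial sums nonzero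
  · intro i hi k hk
    simp only [Finset.mem_Icc] at hi hk
    rw [hrow i k]
    exact S2H.castNeZero _ _ (hrowbound i k hi.2 hk.1 hk.2)
      (mul_ne_zero (pow_ne_zero _ (by norm_num)) (S2H.rowF_ne _ _ hk.1))
  · intro i hi k hk k' hk' h
    simp only [Finset.mem_Icc] at hi hk hk'
    rw [hrow i k, hrow i k'] at h
    have h1 := S2H.castInj _ _ _ (hrowbound i k hi.2 hk.1 hk.2)
      (hrowbound i k' hi.2 hk'.1 hk'.2) h
    have h2 := mul_left_cancel₀ (pow_ne_zero i (show (-1 : ℤ) ≠ 0 by norm_num)) h1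
    exact S2H.rowF_inj _ _ _ hk.1 hk'.1 h2
  · intro j hj k hk
    simp only [Finset.mem_Icc] at hj hk
    rw [hcol j k]
    exact S2H.castNeZero _ _ (hcolbound j k hj.2 hk.1 hk.2)
      (mul_ne_zero (pow_ne_zero _ (by norm_num)) (S2H.colF_ne n j k hn hj.1 hk.1))
  · intro j hj k hk k' hk' h
    simp only [Finset.mem_Icc] at hj hk hk'
    rw [hcol j k, hcol j k'] at h
    have h1 := S2H.castInj _ _ _ (hcolbound j k hj.2 hk.1 hk.2)
      (hcolbound j k' hj.2 hk'.1 hk'.2) h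
    have h2 := mul_left_cancel₀ (pow_ne_zero j (show (-1 : ℤ) ≠ 0 by norm_num)) h1
    exact S2H.colF_inj n j _ _ hn hj.1 hk.1 hk'.1 h2
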